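/- The cone of completely positive maps is self-dual under the pairing ⟨ψ, φ⟩ = s(ψ ∘ φ): a Hermitian-preserving map ψ: B(K) → B(H) satisfies ⟨ψ, φ⟩ ≥ 0 for all completely positive φ: B(H) → B(K) if and only if ψ is completely positive. -/

import Mathlib

open scoped Matrix Kronecker ComplexOrder Matrix.Norms.L2Operator

noncomputable section

/-- Square complex matrices indexed by `ι`. -/
abbrev Mat (ι : Type) [Fintype ι] [DecidableEq ι] : Type := Matrix ι ι ℂ

/-- Linear maps between matrix algebras. -/
abbrev MatMap (ι κ : Type) [Fintype ι] [DecidableEq ι] [Fintype κ] [DecidableEq κ] : Type :=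
  Mat ι →ₗ[ℂ] Mat κ

variable {ι κ μ ν : Type} [Fintype ι] [DecidableEq ι] [Fintype κ] [DecidableEq κ]
  [Fintype μ] [DecidableEq μ] [Fintype ν] [DecidableEq ν]

/-- `φ ⊗ id_τ`, the amplification of `φ` with the identity on `Mat τ`. -/
def tensorId (φ : MatMap ι κ) (τ : Type) [Fintype τ] [DecidableEq τ] :
    Matrix (ι × τ) (ι × τ) ℂ →ₗ[ℂ] Matrix (κ × τ) (κ × τ) ℂ where
  toFun X := Matrix.of fun p q => φ (Matrix.of fun i j => X (i, p.2) (j, q.2)) p.1 q.1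
  map_add' X Y := by
    funext p q
    show φ (Matrix.of fun i j => (X + Y) (i, p.2) (j, q.2)) p.1 q.1 = _
    rw [show (Matrix.of fun i j => (X + Y) (i, p.2) (j, q.2))
        = (Matrix.of fun i j => X (i, p.2) (j, q.2))
          + (Matrix.of fun i j => Y (i, p.2) (j, q.2)) from rfl, map_add]
    rfl
  map_smul' c X := by
    funext p q
    show φ (Matrix.of fun i j => (c • X) (i, p.2) (j, q.2)) p.1 q.1 = _
    rw [show (Matrix.of fun i j => (c • X) (i, p.2) (j, q.2))
        = c • (Matrix.of fun i j => X (i, p.2) (j, q.2)) from rfl, map_smul]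
    rfl

/-- `φ` is Hermitian-preserving. -/
def IsHermitianPreserving (φ : MatMap ι κ) : Prop := ∀ X, (φ X)ᴴ = φ Xᴴ

/-- `φ` is completely positive: all amplifications by finite-dimensional identities
preserve positive semidefiniteness. -/
def IsCP (φ : MatMap ι κ) : Prop :=
  ∀ (l : ℕ) (X : Matrix (ι × Fin l) (ι × Fin l) ℂ), X.PosSemidef →
    (tensorId φ (Fin l) X).PosSemidef

/-- `φ` is trace-preserving. -/
def IsTP (φ : MatMap ι κ) : Prop := ∀ X, (φ X).trace = X.trace

/-- A channel is a completely positive trace-preserving map. -/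
def IsChannel (φ : MatMap ι κ) : Prop := IsCP φ ∧ IsTP φ

/-- Density operator. -/
def IsState (σ : Mat ι) : Prop := σ.PosSemidef ∧ σ.trace = 1

/-- The Choi matrix of `φ`. -/
def choiMatrix (φ : MatMap ι κ) : Matrix (κ × ι) (κ × ι) ℂ :=
  Matrix.of fun p q => φ (Matrix.single p.2 q.2 1) p.1 q.1

/-- The tracelike functional `s`. -/
def sFun (φ : MatMap ι ι) : ℂ :=
  ∑ i, ∑ j, φ (Matrix.single i j 1) i j

/-- The pairing `⟨ψ, φ⟩ = s(ψ ∘ φ)`. -/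
def pairing (ψ : MatMap κ ι) (φ : MatMap ι κ) : ℂ := sFun (ψ ∘ₗ φ)

/-- The erasure map `A ↦ Tr[A] σ`. -/
def erasure (σ : Mat κ) : MatMap ι κ :=
  (Matrix.traceLinearMap ι ℂ ℂ).smulRight σ

/-- The diamond norm, via its order-theoretic characterization. -/
noncomputable def diamondNorm (φ : MatMap ι κ) : ℝ :=
  sInf {r : ℝ | 0 < r ∧ ∃ α : MatMap ι κ, IsChannel α ∧
    IsCP ((r : ℂ) • α - φ) ∧ IsCP ((r : ℂ) • α + φ)}

/-- The dual diamond norm, via its order-theoretic characterization. -/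
noncomputable def dualDiamondNorm (ψ : MatMap ι κ) : ℝ :=
  sInf {r : ℝ | 0 < r ∧ ∃ σ : Mat κ, IsState σ ∧
    IsCP ((r : ℂ) • erasure (ι := ι) σ - ψ) ∧ IsCP ((r : ℂ) • erasure (ι := ι) σ + ψ)}

/-- The Hilbert–Schmidt (trace-duality) adjoint of `ψ`. -/
def adjointMap (ψ : MatMap ι κ) : MatMap κ ι where
  toFun A := Matrix.of fun i j => (A * ψ (Matrix.single j i 1)).trace
  map_add' A B := by funext i j; simp [Matrix.add_mul]
  map_smul' c A := by funext i j; simp [Matrix.smul_mul]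

/-- The cq-map associated with a family of operators. -/
def cqMap {n : ℕ} (A : Fin n → Mat ι) : MatMap (Fin n) ι where
  toFun X := ∑ i, X i i • A i
  map_add' X Y := by simp [Matrix.add_apply, add_smul, Finset.sum_add_distrib]
  map_smul' c X := by simp [Matrix.smul_apply, smul_smul, Finset.smul_sum]

/-- The qc-map associated with a family of operators. -/
def qcMap {n : ℕ} (B : Fin n → Mat ι) : MatMap ι (Fin n) where
  toFun X := Matrix.diagonal fun i => (X * B i).trace
  map_add' X Y := by
    funext i j
    by_cases h : i = j <;>
      simp [Matrix.add_mul, Matrix.diagonal, Matrix.of_apply, h]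
  map_smul' c X := by
    funext i j
    by_cases h : i = j <;>
      simp [Matrix.smul_mul, Matrix.diagonal, Matrix.of_apply, h]

/-- A POVM with `n` outcomes. -/
def IsPOVM {n : ℕ} (M : Fin n → Mat ι) : Prop :=
  (∀ i, (M i).PosSemidef) ∧ ∑ i, M i = 1

/-- An ensemble: probabilities with states. -/
def IsEnsemble {n : ℕ} (lam : Fin n → ℝ) (σ : Fin n → Mat ι) : Prop :=
  (∀ i, 0 < lam i) ∧ (∑ i, lam i = 1) ∧ ∀ i, IsState (σ i)

/-- Optimal success probability of guessing among the states of an ensemble. -/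
noncomputable def pSucc {n : ℕ} (lam : Fin n → ℝ) (σ : Fin n → Mat ι) : ℝ :=
  sSup {r : ℝ | ∃ M : Fin n → Mat ι, IsPOVM M ∧
    r = ∑ i, lam i * ((M i * σ i).trace).re}

/-- Square root of a positive semidefinite matrix (removed from Mathlib; old definition). -/
def Matrix.PosSemidef.sqrt {n 𝕜 : Type*} [Fintype n] [DecidableEq n] [RCLike 𝕜]
    {A : Matrix n n 𝕜} (hA : A.PosSemidef) : Matrix n n 𝕜 :=
  hA.1.eigenvectorUnitary.1 * Matrix.diagonal ((↑) ∘ Real.sqrt ∘ hA.1.eigenvalues) *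
    (star hA.1.eigenvectorUnitary : Matrix n n 𝕜)

/-- Trace norm `‖A‖₁ = Tr √(AᴴA)`. -/
noncomputable def traceNorm (A : Mat ι) : ℝ :=
  ((Matrix.posSemidef_conjTranspose_mul_self A).sqrt).trace.re

/-- Le Cam deficiency of `Φ` with respect to `Ψ`. -/
noncomputable def deficiency (Φ : MatMap ι κ) (Ψ : MatMap ι μ) : ℝ :=
  sInf {r : ℝ | ∃ α : MatMap μ κ, IsChannel α ∧ r = diamondNorm (Φ - α ∘ₗ Ψ)}
section Aux
variable {ι κ : Type} [Fintype ι] [DecidableEq ι] [Fintype κ] [DecidableEq κ]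

lemma choi_apply (φ : MatMap ι κ) (A : Mat ι) (a b : κ) :
    φ A a b = ∑ i, ∑ j, A i j * choiMatrix φ (a, i) (b, j) := by
  conv_lhs => rw [Matrix.matrix_eq_sum_single A]
  rw [map_sum]
  simp only [Matrix.sum_apply]
  refine Finset.sum_congr rfl fun i _ => ?_
  rw [map_sum]
  simp only [Matrix.sum_apply]
  refine Finset.sum_congr rfl fun j _ => ?_
  rw [show Matrix.single i j (A i j) = A i j • Matrix.single i j 1 by
    rw [Matrix.smul_single, smul_eq_mul, mul_one], map_smul]
  rfl

lemma tensorId_apply' (φ : MatMap ι κ) (τ : Type) [Fintype τ] [DecidableEq τ]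
    (X : Matrix (ι × τ) (ι × τ) ℂ) (p q : κ × τ) :
    tensorId φ τ X p q = ∑ i, ∑ j, X (i, p.2) (j, q.2) * choiMatrix φ (p.1, i) (q.1, j) := by
  show φ (Matrix.of fun i j => X (i, p.2) (j, q.2)) p.1 q.1 = _
  rw [choi_apply]
  rfl

end Aux
section Aux2
variable {ι κ : Type} [Fintype ι] [DecidableEq ι] [Fintype κ] [DecidableEq κ]

lemma cp_of_choi_psd (φ : MatMap ι κ) (hJ : (choiMatrix φ).PosSemidef) : IsCP φ := by
  intro l X hX
  obtain ⟨B, hB⟩ : ∃ B, X = Bᴴ * B := by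
    open scoped MatrixOrder in exact CStarAlgebra.nonneg_iff_eq_star_mul_self.mp hX.nonneg
  obtain ⟨C, hC⟩ : ∃ C, choiMatrix φ = Cᴴ * C :=
    by open scoped MatrixOrder in exact CStarAlgebra.nonneg_iff_eq_star_mul_self.mp hJ.nonneg
  set D : Matrix ((ι × Fin l) × (κ × ι)) (κ × Fin l) ℂ :=
    Matrix.of fun st bq => ∑ j, B st.1 (j, bq.2) * C st.2 (bq.1, j) with hD
  have key : tensorId φ (Fin l) X = Dᴴ * D := by
    ext ⟨a, p⟩ ⟨b, q⟩
    rw [tensorId_apply']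
    simp only [hB, hC, Matrix.mul_apply, Matrix.conjTranspose_apply, hD, Matrix.of_apply,
      star_sum, star_mul', Finset.sum_mul, Finset.mul_sum]
    rw [Fintype.sum_prod_type]
    conv_lhs => enter [2, i, 2, j]; rw [Finset.sum_comm]
    conv_lhs => enter [2, i]; rw [Finset.sum_comm]
    rw [Finset.sum_comm]
    conv_lhs => enter [2, s, 2, i]; rw [Finset.sum_comm]
    conv_lhs => enter [2, s]; rw [Finset.sum_comm]
    conv_rhs => enter [2, s, 2, t]; rw [Finset.sum_comm]
    refine Finset.sum_congr rfl fun s _ => ?_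
    refine Finset.sum_congr rfl fun t _ => ?_
    refine Finset.sum_congr rfl fun i _ => ?_
    refine Finset.sum_congr rfl fun j _ => ?_
    ring
  rw [key]
  exact Matrix.posSemidef_conjTranspose_mul_self D

end Aux2
section Aux3
variable {ι κ : Type} [Fintype ι] [DecidableEq ι] [Fintype κ] [DecidableEq κ]

/-- The (unnormalized) maximally entangled state. -/
def maxEnt (n : ℕ) : Matrix (Fin n × Fin n) (Fin n × Fin n) ℂ :=
  Matrix.of fun p q => (if p.1 = p.2 then 1 else 0) * (if q.1 = q.2 then 1 else 0)

lemma maxEnt_posSemidef (n : ℕ) : (maxEnt n).PosSemidef := by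
  refine Matrix.PosSemidef.of_dotProduct_mulVec_nonneg ?_ ?_
  · ext p q
    simp only [Matrix.conjTranspose_apply, maxEnt, Matrix.of_apply]
    split_ifs <;> simp
  · intro x
    have : dotProduct (star x) (maxEnt n *ᵥ x)
        = star (∑ p : Fin n × Fin n, (if p.1 = p.2 then 1 else 0) * x p)
          * (∑ p : Fin n × Fin n, (if p.1 = p.2 then 1 else 0) * x p) := by
      simp only [dotProduct, Matrix.mulVec, maxEnt, Matrix.of_apply, Pi.star_apply,
        star_sum, star_mul', Finset.sum_mul, Finset.mul_sum]
      rw [Finset.sum_comm]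
      refine Finset.sum_congr rfl fun p _ => Finset.sum_congr rfl fun q _ => ?_
      by_cases h1 : p.1 = p.2 <;> by_cases h2 : q.1 = q.2 <;> simp [h1, h2]
    rw [this]
    exact star_mul_self_nonneg _

lemma choi_psd_of_cp {n : ℕ} (φ : MatMap (Fin n) κ) (hφ : IsCP φ) :
    (choiMatrix φ).PosSemidef := by
  have key : choiMatrix φ = tensorId φ (Fin n) (maxEnt n) := by
    ext ⟨a, i⟩ ⟨b, j⟩
    show _ = φ (Matrix.of fun i' j' => maxEnt n (i', i) (j', j)) a b
    have : (Matrix.of fun i' j' => maxEnt n (i', i) (j', j))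
        = Matrix.single i j (1 : ℂ) := by
      ext i' j'
      simp only [maxEnt, Matrix.single, Matrix.of_apply, ite_and, eq_comm,
        mul_ite, mul_one, mul_zero, ite_mul, one_mul, zero_mul]
      split_ifs <;> rfl
    rw [this]
    rfl
  rw [key]
  exact hφ n (maxEnt n) (maxEnt_posSemidef n)

lemma tensorId_comp {μ : Type} [Fintype μ] [DecidableEq μ] (ψ : MatMap κ μ) (φ : MatMap ι κ)
    (τ : Type) [Fintype τ] [DecidableEq τ] (X : Matrix (ι × τ) (ι × τ) ℂ) :
    tensorId (ψ ∘ₗ φ) τ X = tensorId ψ τ (tensorId φ τ X) := by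
  rfl

lemma isCP_comp {μ : Type} [Fintype μ] [DecidableEq μ] {ψ : MatMap κ μ} {φ : MatMap ι κ}
    (hψ : IsCP ψ) (hφ : IsCP φ) : IsCP (ψ ∘ₗ φ) := by
  intro l X hX
  rw [tensorId_comp]
  exact hψ l _ (hφ l X hX)

lemma sFun_nonneg {n : ℕ} (χ : MatMap (Fin n) (Fin n)) (hχ : (choiMatrix χ).PosSemidef) :
    0 ≤ sFun χ := by
  have h := hχ.dotProduct_mulVec_nonneg (fun p => if p.1 = p.2 then 1 else 0)
  have e : dotProduct (star fun p : Fin n × Fin n => if p.1 = p.2 then (1:ℂ) else 0)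
      (choiMatrix χ *ᵥ fun p => if p.1 = p.2 then 1 else 0) = sFun χ := by
    simp only [dotProduct, Matrix.mulVec, Pi.star_apply, Fintype.sum_prod_type, sFun,
      apply_ite (star : ℂ → ℂ), star_one, star_zero, ite_mul, mul_ite, one_mul, mul_one,
      zero_mul, mul_zero, Finset.sum_ite_eq, Finset.sum_ite_eq', Finset.mem_univ, if_true]
    rfl
  rw [e] at h
  exact h

end Aux3
section Aux4
variable {ι κ : Type} [Fintype ι] [DecidableEq ι] [Fintype κ] [DecidableEq κ]

lemma pairing_eq (ψ : MatMap κ ι) (φ : MatMap ι κ) :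
    pairing ψ φ
      = ∑ i, ∑ j, ∑ a, ∑ b, choiMatrix φ (a, i) (b, j) * choiMatrix ψ (i, a) (j, b) := by
  unfold pairing sFun
  refine Finset.sum_congr rfl fun i _ => Finset.sum_congr rfl fun j _ => ?_
  show ψ (φ (Matrix.single i j 1)) i j = _
  rw [choi_apply]
  rfl

lemma choi_isHermitian (ψ : MatMap κ ι) (hψ : IsHermitianPreserving ψ) :
    (choiMatrix ψ).IsHermitian := by
  ext ⟨i, a⟩ ⟨j, b⟩
  show star (ψ (Matrix.single b a 1) j i) = ψ (Matrix.single a b 1) i j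
  have h1 : (ψ (Matrix.single b a 1))ᴴ i j = ψ (Matrix.single b a 1)ᴴ i j := by
    rw [hψ]
  have h2 : (Matrix.single b a (1:ℂ))ᴴ = Matrix.single a b 1 := by
    ext u v
    simp only [Matrix.conjTranspose_apply, Matrix.single, Matrix.of_apply, ite_and]
    split_ifs <;> simp_all [eq_comm]
  rw [Matrix.conjTranspose_apply, h2] at h1
  exact h1

lemma vec_psd {α : Type} [Fintype α] [DecidableEq α] (v : α → ℂ) :
    (Matrix.of fun p q => star (v p) * v q : Matrix α α ℂ).PosSemidef := by
  refine Matrix.PosSemidef.of_dotProduct_mulVec_nonneg ?_ ?_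
  · ext p q
    simp only [Matrix.conjTranspose_apply, Matrix.of_apply, star_mul', star_star]
    ring
  · intro y
    have : dotProduct (star y) ((Matrix.of fun p q => star (v p) * v q) *ᵥ y)
        = star (∑ p, v p * y p) * (∑ p, v p * y p) := by
      simp only [dotProduct, Matrix.mulVec, Matrix.of_apply, Pi.star_apply,
        star_sum, star_mul', Finset.sum_mul, Finset.mul_sum]
      rw [Finset.sum_comm]
      refine Finset.sum_congr rfl fun p _ => Finset.sum_congr rfl fun q _ => ?_
      ring
    rw [this]
    exact star_mul_self_nonneg _

/-- The linear map with prescribed Choi matrix. -/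
def ofChoi (N : Matrix (κ × ι) (κ × ι) ℂ) : MatMap ι κ where
  toFun X := Matrix.of fun a b => ∑ i, ∑ j, X i j * N (a, i) (b, j)
  map_add' X Y := by
    ext a b
    simp [Matrix.add_apply, add_mul, Finset.sum_add_distrib]
  map_smul' c X := by
    ext a b
    simp [Matrix.smul_apply, smul_eq_mul, Finset.mul_sum, mul_assoc]

lemma choiMatrix_ofChoi (N : Matrix (κ × ι) (κ × ι) ℂ) : choiMatrix (ofChoi N) = N := by
  ext ⟨a, i⟩ ⟨b, j⟩
  show ∑ i', ∑ j', Matrix.single i j 1 i' j' * N (a, i') (b, j') = N (a, i) (b, j)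
  simp [Matrix.single, ite_and, ite_mul]

end Aux4
theorem cp_cone_selfdual {h k : ℕ} (ψ : MatMap (Fin k) (Fin h))
    (hψ : IsHermitianPreserving ψ) :
    (∀ φ : MatMap (Fin h) (Fin k), IsCP φ → 0 ≤ pairing ψ φ) ↔ IsCP ψ := by
  constructor
  · intro hpair
    apply cp_of_choi_psd
    refine Matrix.PosSemidef.of_dotProduct_mulVec_nonneg (choi_isHermitian ψ hψ) fun x => ?_
    set N : Matrix (Fin k × Fin h) (Fin k × Fin h) ℂ :=
      Matrix.of fun p q => star (x (p.2, p.1)) * x (q.2, q.1) with hN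
    have hNpsd : N.PosSemidef := vec_psd fun p : Fin k × Fin h => x (p.2, p.1)
    have hcp : IsCP (ofChoi N) :=
      cp_of_choi_psd _ (by rw [choiMatrix_ofChoi]; exact hNpsd)
    have hp := hpair _ hcp
    rw [pairing_eq, choiMatrix_ofChoi] at hp
    have e : ∑ i, ∑ j, ∑ a, ∑ b, N (a, i) (b, j) * choiMatrix ψ (i, a) (j, b)
        = dotProduct (star x) (choiMatrix ψ *ᵥ x) := by
      simp only [dotProduct, Matrix.mulVec, Pi.star_apply, hN, Matrix.of_apply,
        Fintype.sum_prod_type, Finset.mul_sum, Finset.sum_mul]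
      refine Finset.sum_congr rfl fun i _ => ?_
      rw [Finset.sum_comm]
      refine Finset.sum_congr rfl fun a _ => ?_
      refine Finset.sum_congr rfl fun j _ => ?_
      refine Finset.sum_congr rfl fun b _ => ?_
      ring
    rw [e] at hp
    exact hp
  · intro hcp φ hφ
    exact sFun_nonneg _ (choi_psd_of_cp _ (isCP_comp hcp hφ))
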